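/- Let (R,d) be a finite metric space, let ℓ ≥ 1 be a real number, and let w : R → ℝ satisfy w(v) ≥ 1/2 for every v ∈ R and Σ_{v∈R} w(v) ≥ ℓ. Then there exist a partition 𝒥 of R into nonempty sets, a map par : 𝒥 → Option 𝒥, and a rank function rk : 𝒥 → ℕ with the property that par(J) = some J' implies rk(J') < rk(J) (so par defines a rooted forest on 𝒥), such that, writing w(J) := Σ_{v∈J} w(v) and, for J ≠ R, L(J) := min{d(v,v') : v ∈ J, v' ∈ R∖J}, the following hold: (a) for every J ∈ 𝒥 with J ≠ R, the graph on vertex set J with an edge between v and v' whenever d(v,v') ≤ L(J) is connected; (b) par(J) = none if and only if w(J) ≥ ℓ; (c) if par(J) = none then w(J) < 2ℓ or |J| = 1; (d) if par(J) = some J' then L(J) ≥ L(J'); (e) if par(J) = some J' then min{d(v,v') : v ∈ J, v' ∈ J'} ≤ 5ℓ·L(J); (f) for every J' ∈ 𝒥, at most two J ∈ 𝒥 satisfy par(J) = some J'. -/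

import Mathlib

set_option linter.unusedSectionVars false

namespace Stmt5

open Finset Relation

variable {R : Type*} [MetricSpace R] [Fintype R] [DecidableEq R]

noncomputable def Lf (J : Finset R) : ℝ :=
  sInf {r : ℝ | ∃ v ∈ J, ∃ v', v' ∉ J ∧ r = dist v v'}

noncomputable def dS (J J' : Finset R) : ℝ :=
  sInf {r : ℝ | ∃ v ∈ J, ∃ v' ∈ J', r = dist v v'}

def ConnB (c : ℝ) (J : Finset R) : Prop :=
  ∀ a ∈ J, ∀ b ∈ J, ReflTransGen (fun x y => x ∈ J ∧ y ∈ J ∧ dist x y ≤ c) a b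

def Ipair (P : Finset (Finset R)) (x y : R) : Prop :=
  ∃ A ∈ P, ∃ B ∈ P, A ≠ B ∧ x ∈ A ∧ y ∈ B

lemma Lf_nonneg (J : Finset R) : 0 ≤ Lf J := by
  apply Real.sInf_nonneg
  rintro r ⟨v, -, v', -, rfl⟩; exact dist_nonneg

lemma Lf_le {J : Finset R} {v v' : R} (hv : v ∈ J) (hv' : v' ∉ J) :
    Lf J ≤ dist v v' :=
  csInf_le ⟨0, by rintro r ⟨a,-,b,-,rfl⟩; exact dist_nonneg⟩ ⟨v, hv, v', hv', rfl⟩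

lemma le_Lf {J : Finset R} {c : ℝ} (hJ : J.Nonempty) (hJc : ∃ v', v' ∉ J)
    (h : ∀ v ∈ J, ∀ v', v' ∉ J → c ≤ dist v v') : c ≤ Lf J := by
  apply le_csInf
  · obtain ⟨v, hv⟩ := hJ; obtain ⟨v', hv'⟩ := hJc
    exact ⟨dist v v', v, hv, v', hv', rfl⟩
  · rintro r ⟨v, hv, v', hv', rfl⟩; exact h v hv v' hv'

lemma dS_le {J J' : Finset R} {v v' : R} (hv : v ∈ J) (hv' : v' ∈ J') :
    dS J J' ≤ dist v v' :=
  csInf_le ⟨0, by rintro r ⟨a,-,b,-,rfl⟩; exact dist_nonneg⟩ ⟨v, hv, v', hv', rfl⟩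

lemma connB_mono {c c' : ℝ} {J J' : Finset R} (hJ : J ⊆ J') (hc : c ≤ c')
    (h : ConnB c J) : ∀ a ∈ J, ∀ b ∈ J,
      ReflTransGen (fun x y => x ∈ J' ∧ y ∈ J' ∧ dist x y ≤ c') a b := by
  intro a ha b hb
  exact ReflTransGen.mono (r := fun x y => x ∈ J ∧ y ∈ J ∧ dist x y ≤ c)
    (p := fun x y => x ∈ J' ∧ y ∈ J' ∧ dist x y ≤ c')
    (fun x y hxy => ⟨hJ hxy.1, hJ hxy.2.1, hxy.2.2.trans hc⟩) a b (h a ha b hb)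

structure Inv (ℓ : ℝ) (w : R → ℝ) (P F : Finset (Finset R))
    (par : Finset R → Option (Finset R)) (rk : Finset R → ℕ)
    (cmp : R → Finset R) (lc : Finset R → Option (Finset R)) (N : ℕ) : Prop where
  pne : ∀ A ∈ P, A.Nonempty
  pdisj : ∀ A ∈ P, ∀ B ∈ P, A ≠ B → Disjoint A B
  pcov : ∀ x : R, ∃ A ∈ P, x ∈ A
  pconn : ∀ A ∈ P, (∑ v ∈ A, w v) < ℓ → ConnB (Lf A) A
  pdiam : ∀ A ∈ P, (∑ v ∈ A, w v) < ℓ →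
    ∀ a ∈ A, ∀ b ∈ A, dist a b ≤ (2 * (∑ v ∈ A, w v) - 1) * Lf A
  fne : ∀ J ∈ F, J.Nonempty
  fsub : ∀ J ∈ F, ∃ Q ∈ P, ℓ ≤ (∑ v ∈ Q, w v) ∧ J ⊆ Q
  fcmp : ∀ J ∈ F, ∀ x ∈ J, cmp x = J
  cmpm : ∀ Q ∈ P, ℓ ≤ (∑ v ∈ Q, w v) → ∀ x ∈ Q, cmp x ∈ F ∧ x ∈ cmp x ∧ cmp x ⊆ Q
  fconn : ∀ J ∈ F, J ≠ Finset.univ → ConnB (Lf J) J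
  fdiam : ∀ J ∈ F, ∀ a ∈ J, ∀ b ∈ J, ∀ x y, Ipair P x y →
    dist a b ≤ (4 * ℓ - 1) * dist x y
  lcm : ∀ K X, lc K = some X → K ∈ F ∧ X ∈ F ∧ X ≠ K
  lcd : ∀ K X, lc K = some X → ∃ a ∈ K, ∃ b ∈ X, ∀ x y, Ipair P x y → dist a b ≤ dist x y
  lcL : ∀ K X, lc K = some X → ∀ x y, Ipair P x y → Lf X ≤ dist x y
  pariff : ∀ J ∈ F, (par J = none ↔ ℓ ≤ ∑ v ∈ J, w v)
  parroot : ∀ J ∈ F, par J = none → (∑ v ∈ J, w v) < 2 * ℓ ∨ J.card = 1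
  parsome : ∀ J ∈ F, ∀ J', par J = some J' →
    J' ∈ F ∧ rk J' < rk J ∧ Lf J' ≤ Lf J ∧ dS J J' ≤ 5 * ℓ * Lf J
  rklt : ∀ J ∈ F, rk J < N
  indeg : ∀ K ∈ F,
    (F.filter (fun J => par J = some K)).card
      + (if lc K = none then 1 else 0)
      + (F.filter (fun J => lc J = some K)).card ≤ 2

section PartStep

variable {ℓ : ℝ} {w : R → ℝ} {P : Finset (Finset R)} {A B : Finset R}

lemma part_step (hpne : ∀ C ∈ P, C.Nonempty)
    (hpdisj : ∀ C ∈ P, ∀ D ∈ P, C ≠ D → Disjoint C D)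
    (hpcov : ∀ x : R, ∃ C ∈ P, x ∈ C)
    (hA : A ∈ P) (hB : B ∈ P) (hAB : A ≠ B) :
    (A ∪ B ∉ (P.erase A).erase B) ∧
    ((insert (A ∪ B) ((P.erase A).erase B)).card + 1 = P.card) ∧
    (∀ C ∈ insert (A ∪ B) ((P.erase A).erase B), C.Nonempty) ∧
    (∀ C ∈ insert (A ∪ B) ((P.erase A).erase B),
      ∀ D ∈ insert (A ∪ B) ((P.erase A).erase B), C ≠ D → Disjoint C D) ∧
    (∀ x : R, ∃ C ∈ insert (A ∪ B) ((P.erase A).erase B), x ∈ C) ∧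
    (∀ x y, Ipair (insert (A ∪ B) ((P.erase A).erase B)) x y → Ipair P x y) := by
  have hmem : ∀ C ∈ (P.erase A).erase B, C ≠ A ∧ C ≠ B ∧ C ∈ P := by
    intro C hC
    have h1 := Finset.mem_erase.mp hC
    have h2 := Finset.mem_erase.mp h1.2
    exact ⟨h2.1, h1.1, h2.2⟩
  have hABne : (A ∪ B) ∉ (P.erase A).erase B := by
    intro h
    obtain ⟨hne1, hne2, hP⟩ := hmem _ h
    have hd := hpdisj _ hP _ hA hne1
    obtain ⟨a, ha⟩ := hpne A hA
    exact (Finset.disjoint_left.mp hd (Finset.mem_union_left _ ha)) ha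
  have hcard2 : 2 ≤ P.card := Finset.one_lt_card.mpr ⟨A, hA, B, hB, hAB⟩
  have hcard : (insert (A ∪ B) ((P.erase A).erase B)).card + 1 = P.card := by
    rw [Finset.card_insert_of_notMem hABne, Finset.card_erase_of_mem
      (Finset.mem_erase.mpr ⟨Ne.symm hAB, hB⟩), Finset.card_erase_of_mem hA]
    omega
  have hne' : ∀ C ∈ insert (A ∪ B) ((P.erase A).erase B), C.Nonempty := by
    intro C hC
    rcases Finset.mem_insert.mp hC with rfl | hC
    · exact (hpne A hA).mono Finset.subset_union_left
    · exact hpne _ (hmem _ hC).2.2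
  have hdisj' : ∀ C ∈ insert (A ∪ B) ((P.erase A).erase B),
      ∀ D ∈ insert (A ∪ B) ((P.erase A).erase B), C ≠ D → Disjoint C D := by
    intro C hC D hD hCD
    rcases Finset.mem_insert.mp hC with rfl | hC <;>
      rcases Finset.mem_insert.mp hD with rfl | hD
    · exact absurd rfl hCD
    · obtain ⟨hD1, hD2, hDP⟩ := hmem _ hD
      exact Finset.disjoint_union_left.mpr
        ⟨hpdisj _ hA _ hDP (fun h => hD1 h.symm), hpdisj _ hB _ hDP (fun h => hD2 h.symm)⟩
    · obtain ⟨hC1, hC2, hCP⟩ := hmem _ hC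
      exact (Finset.disjoint_union_left.mpr
        ⟨hpdisj _ hA _ hCP (fun h => hC1 h.symm), hpdisj _ hB _ hCP (fun h => hC2 h.symm)⟩).symm
    · exact hpdisj _ (hmem _ hC).2.2 _ (hmem _ hD).2.2 hCD
  have hcov' : ∀ x : R, ∃ C ∈ insert (A ∪ B) ((P.erase A).erase B), x ∈ C := by
    intro x
    obtain ⟨C, hC, hx⟩ := hpcov x
    by_cases h1 : C = A
    · exact ⟨A ∪ B, Finset.mem_insert_self _ _, Finset.mem_union_left _ (h1 ▸ hx)⟩
    by_cases h2 : C = B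
    · exact ⟨A ∪ B, Finset.mem_insert_self _ _, Finset.mem_union_right _ (h2 ▸ hx)⟩
    · exact ⟨C, Finset.mem_insert_of_mem (Finset.mem_erase.mpr
        ⟨h2, Finset.mem_erase.mpr ⟨h1, hC⟩⟩), hx⟩
  refine ⟨hABne, hcard, hne', hdisj', hcov', ?_⟩
  rintro x y ⟨C', hC', D', hD', hne, hx, hy⟩
  obtain ⟨C, hC, hxC⟩ := hpcov x
  obtain ⟨D, hD, hyD⟩ := hpcov y
  by_cases hCD : C ≠ D
  · exact ⟨C, hC, D, hD, hCD, hxC, hyD⟩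
  push_neg at hCD
  subst hCD
  -- C contains both x and y, C is contained in a single part of P'
  have hsub : ∃ E ∈ insert (A ∪ B) ((P.erase A).erase B), C ⊆ E := by
    by_cases h1 : C = A
    · exact ⟨A ∪ B, Finset.mem_insert_self _ _, h1 ▸ Finset.subset_union_left⟩
    by_cases h2 : C = B
    · exact ⟨A ∪ B, Finset.mem_insert_self _ _, h2 ▸ Finset.subset_union_right⟩
    · exact ⟨C, Finset.mem_insert_of_mem (Finset.mem_erase.mpr
        ⟨h2, Finset.mem_erase.mpr ⟨h1, hC⟩⟩), le_refl _⟩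
  obtain ⟨E, hE, hCE⟩ := hsub
  have h1 : C' = E := by
    by_contra h
    exact (Finset.disjoint_left.mp (hdisj' _ hC' _ hE h) hx) (hCE hxC)
  have h2 : D' = E := by
    by_contra h
    exact (Finset.disjoint_left.mp (hdisj' _ hD' _ hE h) hy) (hCE hyD)
  exact absurd (h1.trans h2.symm) hne

end PartStep

section Steps

variable {ℓ : ℝ} {w : R → ℝ} {P F : Finset (Finset R)}
  {par : Finset R → Option (Finset R)} {rk : Finset R → ℕ}
  {cmp : R → Finset R} {lc : Finset R → Option (Finset R)} {N : ℕ}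

lemma half_le_sum (hw : ∀ v : R, 1/2 ≤ w v) {S : Finset R} {a : R} (ha : a ∈ S) :
    1/2 ≤ ∑ v ∈ S, w v := by
  have h0 : ∀ v ∈ S, 0 ≤ w v := fun v _ => le_trans (by norm_num) (hw v)
  exact le_trans (hw a) (Finset.single_le_sum h0 ha)

lemma sum_nonneg' (hw : ∀ v : R, 1/2 ≤ w v) (S : Finset R) : 0 ≤ ∑ v ∈ S, w v :=
  Finset.sum_nonneg fun v _ => le_trans (by norm_num) (hw v)

lemma ipair_of_not_mem (hpcov : ∀ x : R, ∃ C ∈ P, x ∈ C) {A : Finset R}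
    (hA : A ∈ P) {x y : R} (hx : x ∈ A) (hy : y ∉ A) : Ipair P x y := by
  obtain ⟨C, hC, hyC⟩ := hpcov y
  exact ⟨A, hA, C, hC, fun h => hy (h ▸ hyC), hx, hyC⟩

lemma absorb (hℓ : 1 ≤ ℓ) (hw : ∀ v : R, 1/2 ≤ w v)
    (inv : Inv ℓ w P F par rk cmp lc N)
    {A B : Finset R} (hA : A ∈ P) (hB : B ∈ P) (hAB : A ≠ B)
    {u u' : R} (hu : u ∈ A) (hu' : u' ∈ B)
    (hmin : ∀ x y, Ipair P x y → dist u u' ≤ dist x y)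
    (hsA : (∑ v ∈ A, w v) < ℓ) (hsB : ℓ ≤ (∑ v ∈ B, w v)) :
    Inv ℓ w (insert (A ∪ B) ((P.erase A).erase B)) (insert A F)
      (Function.update par A (some ((lc (cmp u')).getD (cmp u'))))
      (Function.update rk A N)
      (fun x => if x ∈ A then A else cmp x)
      (Function.update lc (cmp u') (some A)) (N + 1) := by
  obtain ⟨hABne, hcard, hne', hdisj', hcov', hlift⟩ :=
    part_step inv.pne inv.pdisj inv.pcov hA hB hAB
  set J' := cmp u' with hJ'def
  set T := (lc J').getD J' with hTdef
  have hDAB : Disjoint A B := inv.pdisj _ hA _ hB hAB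
  have hu'A : u' ∉ A := fun h => Finset.disjoint_left.mp hDAB h hu'
  have hJ'm := inv.cmpm B hB hsB u' hu'
  have hJ'F : J' ∈ F := hJ'm.1
  have hu'J' : u' ∈ J' := hJ'm.2.1
  have hJ'B : J' ⊆ B := hJ'm.2.2
  have hFdisjA : ∀ J ∈ F, Disjoint J A := by
    intro J hJ
    obtain ⟨Q, hQ, hQl, hJQ⟩ := inv.fsub J hJ
    have hQA : Q ≠ A := fun h => absurd hQl (by rw [h]; exact not_le.mpr hsA)
    exact Finset.disjoint_of_subset_left hJQ (inv.pdisj _ hQ _ hA hQA)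
  have hAnF : A ∉ F := by
    intro h
    exact Finset.disjoint_left.mp (hFdisjA A h) hu hu
  have hxA : ∀ J ∈ F, ∀ x ∈ J, x ∉ A := fun J hJ x hx =>
    Finset.disjoint_left.mp (hFdisjA J hJ) hx
  have hδ0 : (0:ℝ) ≤ dist u u' := dist_nonneg
  have hIuu' : Ipair P u u' := ⟨A, hA, B, hB, hAB, hu, hu'⟩
  have hLAle : Lf A ≤ dist u u' := Lf_le hu hu'A
  have hδLA : dist u u' ≤ Lf A := by
    apply le_Lf ⟨u, hu⟩ ⟨u', hu'A⟩
    intro v hv v' hv'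
    exact hmin v v' (ipair_of_not_mem inv.pcov hA hv hv')
  have hLA : Lf A = dist u u' := le_antisymm hLAle hδLA
  have hminP' : ∀ x y, Ipair (insert (A ∪ B) ((P.erase A).erase B)) x y →
      dist u u' ≤ dist x y := fun x y h => hmin x y (hlift x y h)
  have hswAB : (∑ v ∈ A ∪ B, w v) = (∑ v ∈ A, w v) + (∑ v ∈ B, w v) :=
    Finset.sum_union hDAB
  have hswA0 : (0:ℝ) ≤ ∑ v ∈ A, w v := sum_nonneg' hw A
  have hswABl : ℓ ≤ ∑ v ∈ A ∪ B, w v := by rw [hswAB]; linarith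
  have hAhalf : 1/2 ≤ ∑ v ∈ A, w v := half_le_sum hw hu
  have huJ' : u ∉ J' := fun h => Finset.disjoint_left.mp hDAB hu (hJ'B h)
  -- main facts about the parent target T
  have hTmain : T ∈ F ∧ Lf T ≤ Lf A ∧ dS A T ≤ 5 * ℓ * Lf A := by
    rcases hlcJ' : lc J' with _ | K
    · have hT : T = J' := by rw [hTdef, hlcJ', Option.getD_none]
      rw [hT]
      refine ⟨hJ'F, ?_, ?_⟩
      · calc Lf J' ≤ dist u' u := Lf_le hu'J' huJ'
          _ = dist u u' := dist_comm u' u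
          _ = Lf A := hLA.symm
      · have h1 : dS A J' ≤ dist u u' := dS_le hu hu'J'
        have h2 : (0:ℝ) ≤ Lf A := Lf_nonneg A
        rw [← hLA] at h1
        nlinarith
    · obtain ⟨hKF1, hKF, hKJ'⟩ := inv.lcm J' K hlcJ'
      have hT : T = K := by rw [hTdef, hlcJ', Option.getD_some]
      obtain ⟨aJ, haJ, bK, hbK, hab⟩ := inv.lcd J' K hlcJ'
      have h1 : dist aJ bK ≤ dist u u' := hab u u' hIuu'
      have h2 : dist u' aJ ≤ (4 * ℓ - 1) * dist u u' :=
        inv.fdiam J' hJ'F u' hu'J' aJ haJ u u' hIuu'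
      have h3 : dS A K ≤ dist u bK := dS_le hu hbK
      have h4 : dist u bK ≤ dist u u' + dist u' aJ + dist aJ bK := dist_triangle4 u u' aJ bK
      rw [hT]
      refine ⟨hKF, ?_, ?_⟩
      · rw [hLA]; exact inv.lcL J' K hlcJ' u u' hIuu'
      · rw [hLA]; nlinarith
  obtain ⟨hTF, hTLf, hTdS⟩ := hTmain
  have hTA : T ≠ A := fun h => hAnF (h ▸ hTF)
  have hAJ' : A ≠ J' := fun h => hAnF (h ▸ hJ'F)
  have hpar'A : Function.update par A (some T) A = some T := Function.update_self _ _ _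
  have hparF : ∀ J ∈ F, Function.update par A (some T) J = par J := by
    intro J hJ
    apply Function.update_of_ne
    intro h; rw [h] at hJ; exact hAnF hJ
  have hrkF : ∀ J ∈ F, Function.update rk A N J = rk J := by
    intro J hJ
    apply Function.update_of_ne
    intro h; rw [h] at hJ; exact hAnF hJ
  have hlcA : lc A = none := by
    rcases h : lc A with _ | X
    · rfl
    · exact absurd (inv.lcm A X h).1 hAnF
  have hlc'J' : Function.update lc J' (some A) J' = some A := Function.update_self _ _ _
  have hlc'A : Function.update lc J' (some A) A = none := by
    rw [Function.update_of_ne hAJ', hlcA]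
  constructor
  · exact hne'
  · exact hdisj'
  · exact hcov'
  · -- pconn
    intro C hC hsC
    rcases Finset.mem_insert.mp hC with hCe | hC
    · subst C; rw [hswAB] at hsC; linarith
    · have := Finset.mem_erase.mp hC
      exact inv.pconn C (Finset.mem_erase.mp this.2).2 hsC
  · -- pdiam
    intro C hC hsC
    rcases Finset.mem_insert.mp hC with hCe | hC
    · subst C; rw [hswAB] at hsC; linarith
    · have := Finset.mem_erase.mp hC
      exact inv.pdiam C (Finset.mem_erase.mp this.2).2 hsC
  · -- fne
    intro J hJ
    rcases Finset.mem_insert.mp hJ with hJe | hJ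
    · subst J; exact ⟨u, hu⟩
    · exact inv.fne J hJ
  · -- fsub
    intro J hJ
    rcases Finset.mem_insert.mp hJ with hJe | hJ
    · subst J
      exact ⟨A ∪ B, Finset.mem_insert_self _ _, hswABl, Finset.subset_union_left⟩
    · obtain ⟨Q, hQ, hQl, hJQ⟩ := inv.fsub J hJ
      by_cases hQB : Q = B
      · exact ⟨A ∪ B, Finset.mem_insert_self _ _, hswABl,
          hJQ.trans (hQB ▸ Finset.subset_union_right)⟩
      · have hQA : Q ≠ A := fun h => absurd hQl (by rw [h]; exact not_le.mpr hsA)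
        exact ⟨Q, Finset.mem_insert_of_mem (Finset.mem_erase.mpr
          ⟨hQB, Finset.mem_erase.mpr ⟨hQA, hQ⟩⟩), hQl, hJQ⟩
  · -- fcmp
    intro J hJ x hx
    rcases Finset.mem_insert.mp hJ with hJe | hJ
    · subst J; simp [hx]
    · have hxnA : x ∉ A := hxA J hJ x hx
      simp only [if_neg hxnA]
      exact inv.fcmp J hJ x hx
  · -- cmpm
    intro Q hQ hQl x hx
    rcases Finset.mem_insert.mp hQ with hQe | hQ
    · subst Q
      by_cases hxAm : x ∈ A
      · simp only [if_pos hxAm]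
        exact ⟨Finset.mem_insert_self _ _, hxAm, Finset.subset_union_left⟩
      · simp only [if_neg hxAm]
        have hxB : x ∈ B := by
          rcases Finset.mem_union.mp hx with h | h
          · exact absurd h hxAm
          · exact h
        obtain ⟨h1, h2, h3⟩ := inv.cmpm B hB hsB x hxB
        exact ⟨Finset.mem_insert_of_mem h1, h2, h3.trans Finset.subset_union_right⟩
    · have hmem := Finset.mem_erase.mp hQ
      have hmem2 := Finset.mem_erase.mp hmem.2
      have hxnA : x ∉ A := fun h =>
        Finset.disjoint_left.mp (inv.pdisj _ hmem2.2 _ hA hmem2.1) hx h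
      simp only [if_neg hxnA]
      obtain ⟨h1, h2, h3⟩ := inv.cmpm Q hmem2.2 hQl x hx
      exact ⟨Finset.mem_insert_of_mem h1, h2, h3⟩
  · -- fconn
    intro J hJ hJuniv
    rcases Finset.mem_insert.mp hJ with hJe | hJ
    · subst J; exact inv.pconn A hA hsA
    · exact inv.fconn J hJ hJuniv
  · -- fdiam
    intro J hJ a ha b hb x y hxy
    rcases Finset.mem_insert.mp hJ with hJe | hJ
    · subst J
      have h1 : dist a b ≤ (2 * (∑ v ∈ A, w v) - 1) * Lf A := inv.pdiam A hA hsA a ha b hb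
      have h2 : dist u u' ≤ dist x y := hminP' x y hxy
      have h3 : (0:ℝ) ≤ dist x y := le_trans hδ0 h2
      rw [hLA] at h1
      nlinarith
    · exact inv.fdiam J hJ a ha b hb x y (hlift x y hxy)
  · -- lcm
    intro K X hKX
    by_cases hKJ' : K = J'
    · subst hKJ'
      rw [hlc'J'] at hKX
      have hXA : X = A := (Option.some_inj.mp hKX).symm
      subst hXA
      exact ⟨Finset.mem_insert_of_mem hJ'F, Finset.mem_insert_self _ _, hAJ'⟩
    · rw [Function.update_of_ne hKJ'] at hKX
      obtain ⟨h1, h2, h3⟩ := inv.lcm K X hKX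
      exact ⟨Finset.mem_insert_of_mem h1, Finset.mem_insert_of_mem h2, h3⟩
  · -- lcd
    intro K X hKX
    by_cases hKJ' : K = J'
    · subst hKJ'
      rw [hlc'J'] at hKX
      have hXA : X = A := (Option.some_inj.mp hKX).symm
      subst hXA
      refine ⟨u', hu'J', u, hu, fun x y h => ?_⟩
      rw [dist_comm]
      exact hminP' x y h
    · rw [Function.update_of_ne hKJ'] at hKX
      obtain ⟨a, ha, b, hb, hab⟩ := inv.lcd K X hKX
      exact ⟨a, ha, b, hb, fun x y h => hab x y (hlift x y h)⟩
  · -- lcL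
    intro K X hKX x y hxy
    by_cases hKJ' : K = J'
    · subst hKJ'
      rw [hlc'J'] at hKX
      have hXA : X = A := (Option.some_inj.mp hKX).symm
      subst hXA
      rw [hLA]
      exact hminP' x y hxy
    · rw [Function.update_of_ne hKJ'] at hKX
      exact inv.lcL K X hKX x y (hlift x y hxy)
  · -- pariff
    intro J hJ
    rcases Finset.mem_insert.mp hJ with hJe | hJ
    · subst J
      rw [hpar'A]
      exact iff_of_false (by simp) (not_le.mpr hsA)
    · rw [hparF J hJ]
      exact inv.pariff J hJ
  · -- parroot
    intro J hJ hpj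
    rcases Finset.mem_insert.mp hJ with hJe | hJ
    · subst J; rw [hpar'A] at hpj; exact absurd hpj (by simp)
    · rw [hparF J hJ] at hpj
      exact inv.parroot J hJ hpj
  · -- parsome
    intro J hJ J'' hpj
    rcases Finset.mem_insert.mp hJ with hJe | hJ
    · subst J
      rw [hpar'A] at hpj
      have hJT : J'' = T := (Option.some_inj.mp hpj).symm
      subst hJT
      refine ⟨Finset.mem_insert_of_mem hTF, ?_, hTLf, hTdS⟩
      rw [Function.update_self, Function.update_of_ne hTA]
      exact inv.rklt T hTF
    · rw [hparF J hJ] at hpj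
      obtain ⟨h1, h2, h3, h4⟩ := inv.parsome J hJ J'' hpj
      refine ⟨Finset.mem_insert_of_mem h1, ?_, h3, h4⟩
      rw [hrkF J hJ, hrkF J'' h1]
      exact h2
  · -- rklt
    intro J hJ
    rcases Finset.mem_insert.mp hJ with hJe | hJ
    · subst J; rw [Function.update_self]; omega
    · rw [hrkF J hJ]
      exact Nat.lt_succ_of_lt (inv.rklt J hJ)
  · -- indeg
    intro K hK
    rcases Finset.mem_insert.mp hK with hKe | hKF
    · -- K = A
      subst K
      have h1 : (insert A F).filter
          (fun J => Function.update par A (some T) J = some A) = ∅ := by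
        apply Finset.filter_eq_empty_iff.mpr
        intro J hJ
        rcases Finset.mem_insert.mp hJ with hJe | hJ
        · subst J
          rw [hpar'A]
          simp only [Option.some.injEq]
          exact hTA
        · rw [hparF J hJ]
          intro h
          exact hAnF (inv.parsome J hJ A h).1
      have h2 : (insert A F).filter
          (fun J => Function.update lc J' (some A) J = some A) = {J'} := by
        ext J
        simp only [Finset.mem_filter, Finset.mem_insert, Finset.mem_singleton]
        constructor
        · rintro ⟨hJm, hJp⟩
          rcases hJm with hJe | hJm
          · subst J; rw [hlc'A] at hJp; exact absurd hJp (by simp)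
          · by_cases hJJ' : J = J'
            · exact hJJ'
            · rw [Function.update_of_ne hJJ'] at hJp
              exact absurd (inv.lcm J A hJp).2.1 hAnF
        · rintro rfl
          exact ⟨Or.inr hJ'F, hlc'J'⟩
      rw [h1, h2, hlc'A]
      simp
    · -- K ∈ F
      have hKA : K ≠ A := fun h => hAnF (h ▸ hKF)
      have hc1 : (insert A F).filter (fun J => Function.update par A (some T) J = some K)
          = if T = K then insert A (F.filter (fun J => par J = some K))
            else F.filter (fun J => par J = some K) := by
        rw [Finset.filter_insert, hpar'A]
        have hcong : F.filter (fun J => Function.update par A (some T) J = some K)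
            = F.filter (fun J => par J = some K) :=
          Finset.filter_congr (fun J hJ => by rw [hparF J hJ])
        by_cases hTK : T = K
        · rw [if_pos (by rw [hTK]), if_pos hTK, hcong]
        · rw [if_neg (by simpa using hTK), if_neg hTK, hcong]
      have hc2 : (insert A F).filter (fun J => Function.update lc J' (some A) J = some K)
          = (F.filter (fun J => lc J = some K)).erase J' := by
        ext J
        simp only [Finset.mem_filter, Finset.mem_insert, Finset.mem_erase]
        constructor
        · rintro ⟨hJm, hJp⟩
          rcases hJm with hJe | hJm
          · subst J; rw [hlc'A] at hJp; exact absurd hJp (by simp)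
          · by_cases hJJ' : J = J'
            · subst hJJ'
              rw [hlc'J'] at hJp
              have : A = K := Option.some_inj.mp hJp
              exact absurd this.symm hKA
            · rw [Function.update_of_ne hJJ'] at hJp
              exact ⟨hJJ', hJm, hJp⟩
        · rintro ⟨hJJ', hJm, hJp⟩
          exact ⟨Or.inr hJm, by rw [Function.update_of_ne hJJ']; exact hJp⟩
      have hbase := inv.indeg K hKF
      rw [hc1, hc2]
      rcases hlcJ'2 : lc J' with _ | K0
      · -- lc J' = none, T = J'
        have hTJ' : T = J' := by rw [hTdef, hlcJ'2, Option.getD_none]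
        have hJ'nm : J' ∉ F.filter (fun J => lc J = some K) := by
          simp [Finset.mem_filter, hlcJ'2]
        rw [Finset.erase_eq_of_notMem hJ'nm]
        by_cases hTK : T = K
        · have hKJ'eq : K = J' := hTK.symm.trans hTJ'
          subst hKJ'eq
          rw [if_pos hTK,
            Finset.card_insert_of_notMem (fun h => hAnF (Finset.mem_filter.mp h).1),
            hlc'J', if_neg (Option.some_ne_none A)]
          rw [hlcJ'2, if_pos rfl] at hbase
          omega
        · have hKJ' : K ≠ J' := fun h => hTK (hTJ'.trans h.symm)
          rw [if_neg hTK, Function.update_of_ne hKJ']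
          exact hbase
      · -- lc J' = some K0, T = K0
        have hTK0 : T = K0 := by rw [hTdef, hlcJ'2, Option.getD_some]
        have hK0 := inv.lcm J' K0 hlcJ'2
        by_cases hTK : T = K
        · -- K = K0
          have hKK0 : K = K0 := hTK.symm.trans hTK0
          have hKJ' : K ≠ J' := by rw [hKK0]; exact hK0.2.2
          have hJ'mem : J' ∈ F.filter (fun J => lc J = some K) := by
            rw [Finset.mem_filter]
            exact ⟨hJ'F, by rw [hlcJ'2, hKK0]⟩
          have hpos : 1 ≤ (F.filter (fun J => lc J = some K)).card :=
            Finset.card_pos.mpr ⟨J', hJ'mem⟩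
          rw [if_pos hTK,
            Finset.card_insert_of_notMem (fun h => hAnF (Finset.mem_filter.mp h).1),
            Function.update_of_ne hKJ', Finset.card_erase_of_mem hJ'mem]
          omega
        · by_cases hKJ'c : K = J'
          · subst hKJ'c
            have hJ'nm : J' ∉ F.filter (fun J => lc J = some J') := by
              simp only [Finset.mem_filter, hlcJ'2, Option.some.injEq]
              rintro ⟨-, h⟩
              exact hK0.2.2 h
            rw [Finset.erase_eq_of_notMem hJ'nm, if_neg hTK, hlc'J',
              if_neg (Option.some_ne_none A)]
            rw [hlcJ'2, if_neg (Option.some_ne_none K0)] at hbase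
            omega
          · have hJ'nm : J' ∉ F.filter (fun J => lc J = some K) := by
              simp only [Finset.mem_filter, hlcJ'2, Option.some.injEq]
              rintro ⟨-, h⟩
              exact hTK (hTK0.trans h)
            rw [Finset.erase_eq_of_notMem hJ'nm, if_neg hTK,
              Function.update_of_ne hKJ'c]
            exact hbase

lemma merge_core (hw : ∀ v : R, 1/2 ≤ w v)
    (inv : Inv ℓ w P F par rk cmp lc N)
    {A B : Finset R} (hA : A ∈ P) (hB : B ∈ P) (hAB : A ≠ B)
    {u u' : R} (hu : u ∈ A) (hu' : u' ∈ B)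
    (hsA : (∑ v ∈ A, w v) < ℓ) (hsB : (∑ v ∈ B, w v) < ℓ) :
    (∀ c : ℝ, dist u u' ≤ c → ConnB c (A ∪ B)) ∧
    (∀ a ∈ A ∪ B, ∀ b ∈ A ∪ B,
      dist a b ≤ (2 * (∑ v ∈ A ∪ B, w v) - 1) * dist u u') := by
  have hDAB : Disjoint A B := inv.pdisj _ hA _ hB hAB
  have hu'A : u' ∉ A := fun h => Finset.disjoint_left.mp hDAB h hu'
  have huB : u ∉ B := fun h => Finset.disjoint_right.mp hDAB h hu
  have hLA : Lf A ≤ dist u u' := Lf_le hu hu'A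
  have hLB : Lf B ≤ dist u u' := by
    calc Lf B ≤ dist u' u := Lf_le hu' huB
      _ = dist u u' := dist_comm u' u
  have hδ0 : (0:ℝ) ≤ dist u u' := dist_nonneg
  have hAhalf : 1/2 ≤ ∑ v ∈ A, w v := half_le_sum hw hu
  have hBhalf : 1/2 ≤ ∑ v ∈ B, w v := half_le_sum hw hu'
  have hswAB : (∑ v ∈ A ∪ B, w v) = (∑ v ∈ A, w v) + (∑ v ∈ B, w v) :=
    Finset.sum_union hDAB
  have hcA := inv.pconn A hA hsA
  have hcB := inv.pconn B hB hsB
  have hdA := inv.pdiam A hA hsA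
  have hdB := inv.pdiam B hB hsB
  constructor
  · intro c hc
    have hmA := connB_mono (Finset.subset_union_left (s₂ := B)) (hLA.trans hc) hcA
    have hmB := connB_mono (Finset.subset_union_right (s₁ := A)) (hLB.trans hc) hcB
    have hstep : ReflTransGen
        (fun x y => x ∈ A ∪ B ∧ y ∈ A ∪ B ∧ dist x y ≤ c) u u' :=
      ReflTransGen.single ⟨Finset.mem_union_left _ hu, Finset.mem_union_right _ hu', hc⟩
    have hstep' : ReflTransGen
        (fun x y => x ∈ A ∪ B ∧ y ∈ A ∪ B ∧ dist x y ≤ c) u' u :=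
      ReflTransGen.single ⟨Finset.mem_union_right _ hu', Finset.mem_union_left _ hu,
        by rw [dist_comm]; exact hc⟩
    intro a ha b hb
    rcases Finset.mem_union.mp ha with haA | haB <;>
      rcases Finset.mem_union.mp hb with hbA | hbB
    · exact hmA a haA b hbA
    · exact ((hmA a haA u hu).trans hstep).trans (hmB u' hu' b hbB)
    · exact ((hmB a haB u' hu').trans hstep').trans (hmA u hu b hbA)
    · exact hmB a haB b hbB
  · intro a ha b hb
    rw [hswAB]
    rcases Finset.mem_union.mp ha with haA | haB <;>
      rcases Finset.mem_union.mp hb with hbA | hbB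
    · have h1 : dist a b ≤ (2 * (∑ v ∈ A, w v) - 1) * Lf A := hdA a haA b hbA
      have h2 : (2 * (∑ v ∈ A, w v) - 1) * Lf A
          ≤ (2 * (∑ v ∈ A, w v) - 1) * dist u u' :=
        mul_le_mul_of_nonneg_left hLA (by linarith)
      nlinarith
    · have h1 : dist a u ≤ (2 * (∑ v ∈ A, w v) - 1) * Lf A := hdA a haA u hu
      have h2 : dist u' b ≤ (2 * (∑ v ∈ B, w v) - 1) * Lf B := hdB u' hu' b hbB
      have h3 : dist a b ≤ dist a u + dist u u' + dist u' b := dist_triangle4 a u u' b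
      have h4 : (2 * (∑ v ∈ A, w v) - 1) * Lf A
          ≤ (2 * (∑ v ∈ A, w v) - 1) * dist u u' :=
        mul_le_mul_of_nonneg_left hLA (by linarith)
      have h5 : (2 * (∑ v ∈ B, w v) - 1) * Lf B
          ≤ (2 * (∑ v ∈ B, w v) - 1) * dist u u' :=
        mul_le_mul_of_nonneg_left hLB (by linarith)
      nlinarith
    · have h1 : dist a u' ≤ (2 * (∑ v ∈ B, w v) - 1) * Lf B := hdB a haB u' hu'
      have h2 : dist u b ≤ (2 * (∑ v ∈ A, w v) - 1) * Lf A := hdA u hu b hbA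
      have h3 : dist a b ≤ dist a u' + dist u' u + dist u b := dist_triangle4 a u' u b
      have h4 : (2 * (∑ v ∈ A, w v) - 1) * Lf A
          ≤ (2 * (∑ v ∈ A, w v) - 1) * dist u u' :=
        mul_le_mul_of_nonneg_left hLA (by linarith)
      have h5 : (2 * (∑ v ∈ B, w v) - 1) * Lf B
          ≤ (2 * (∑ v ∈ B, w v) - 1) * dist u u' :=
        mul_le_mul_of_nonneg_left hLB (by linarith)
      rw [dist_comm u' u] at h3
      nlinarith
    · have h1 : dist a b ≤ (2 * (∑ v ∈ B, w v) - 1) * Lf B := hdB a haB b hbB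
      have h2 : (2 * (∑ v ∈ B, w v) - 1) * Lf B
          ≤ (2 * (∑ v ∈ B, w v) - 1) * dist u u' :=
        mul_le_mul_of_nonneg_left hLB (by linarith)
      nlinarith

lemma merge_large (hw : ∀ v : R, 1/2 ≤ w v)
    (inv : Inv ℓ w P F par rk cmp lc N)
    {A B : Finset R} (hA : A ∈ P) (hB : B ∈ P) (hAB : A ≠ B)
    (hlA : ℓ ≤ (∑ v ∈ A, w v)) (hlB : ℓ ≤ (∑ v ∈ B, w v)) :
    Inv ℓ w (insert (A ∪ B) ((P.erase A).erase B)) F par rk cmp lc N := by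
  obtain ⟨hABne, hcard, hne', hdisj', hcov', hlift⟩ :=
    part_step inv.pne inv.pdisj inv.pcov hA hB hAB
  have hDAB : Disjoint A B := inv.pdisj _ hA _ hB hAB
  have hswAB : (∑ v ∈ A ∪ B, w v) = (∑ v ∈ A, w v) + (∑ v ∈ B, w v) :=
    Finset.sum_union hDAB
  have hswABl : ℓ ≤ ∑ v ∈ A ∪ B, w v := by
    have := sum_nonneg' hw B; rw [hswAB]; linarith
  refine ⟨hne', hdisj', hcov', ?_, ?_, inv.fne, ?_, inv.fcmp, ?_, inv.fconn, ?_,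
    inv.lcm, ?_, ?_, inv.pariff, inv.parroot, inv.parsome, inv.rklt, inv.indeg⟩
  · -- pconn
    intro C hC hsC
    rcases Finset.mem_insert.mp hC with hCe | hC
    · subst C; exact absurd hswABl (not_le.mpr hsC)
    · exact inv.pconn C (Finset.mem_erase.mp (Finset.mem_erase.mp hC).2).2 hsC
  · -- pdiam
    intro C hC hsC
    rcases Finset.mem_insert.mp hC with hCe | hC
    · subst C; exact absurd hswABl (not_le.mpr hsC)
    · exact inv.pdiam C (Finset.mem_erase.mp (Finset.mem_erase.mp hC).2).2 hsC
  · -- fsub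
    intro J hJ
    obtain ⟨Q, hQ, hQl, hJQ⟩ := inv.fsub J hJ
    by_cases hQA : Q = A
    · exact ⟨A ∪ B, Finset.mem_insert_self _ _, hswABl,
        hJQ.trans (hQA ▸ Finset.subset_union_left)⟩
    by_cases hQB : Q = B
    · exact ⟨A ∪ B, Finset.mem_insert_self _ _, hswABl,
        hJQ.trans (hQB ▸ Finset.subset_union_right)⟩
    · exact ⟨Q, Finset.mem_insert_of_mem (Finset.mem_erase.mpr
        ⟨hQB, Finset.mem_erase.mpr ⟨hQA, hQ⟩⟩), hQl, hJQ⟩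
  · -- cmpm
    intro Q hQ hQl x hx
    rcases Finset.mem_insert.mp hQ with hQe | hQ
    · subst Q
      rcases Finset.mem_union.mp hx with hxA | hxB
      · obtain ⟨h1, h2, h3⟩ := inv.cmpm A hA hlA x hxA
        exact ⟨h1, h2, h3.trans Finset.subset_union_left⟩
      · obtain ⟨h1, h2, h3⟩ := inv.cmpm B hB hlB x hxB
        exact ⟨h1, h2, h3.trans Finset.subset_union_right⟩
    · obtain ⟨h1, h2, h3⟩ := inv.cmpm Q
        (Finset.mem_erase.mp (Finset.mem_erase.mp hQ).2).2 hQl x hx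
      exact ⟨h1, h2, h3⟩
  · -- fdiam
    intro J hJ a ha b hb x y hxy
    exact inv.fdiam J hJ a ha b hb x y (hlift x y hxy)
  · -- lcd
    intro K X hKX
    obtain ⟨a, ha, b, hb, hab⟩ := inv.lcd K X hKX
    exact ⟨a, ha, b, hb, fun x y h => hab x y (hlift x y h)⟩
  · -- lcL
    intro K X hKX x y hxy
    exact inv.lcL K X hKX x y (hlift x y hxy)

lemma merge_small_small (hw : ∀ v : R, 1/2 ≤ w v) (hwsum : ℓ ≤ ∑ v : R, w v)
    (inv : Inv ℓ w P F par rk cmp lc N)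
    {A B : Finset R} (hA : A ∈ P) (hB : B ∈ P) (hAB : A ≠ B)
    {u u' : R} (hu : u ∈ A) (hu' : u' ∈ B)
    (hmin : ∀ x y, Ipair P x y → dist u u' ≤ dist x y)
    (hsA : (∑ v ∈ A, w v) < ℓ) (hsB : (∑ v ∈ B, w v) < ℓ)
    (hsAB : (∑ v ∈ A ∪ B, w v) < ℓ) :
    Inv ℓ w (insert (A ∪ B) ((P.erase A).erase B)) F par rk cmp lc N := by
  obtain ⟨hABne, hcard, hne', hdisj', hcov', hlift⟩ :=
    part_step inv.pne inv.pdisj inv.pcov hA hB hAB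
  obtain ⟨hconn, hdiam⟩ := merge_core hw inv hA hB hAB hu hu' hsA hsB
  have hminP' : ∀ x y, Ipair (insert (A ∪ B) ((P.erase A).erase B)) x y →
      dist u u' ≤ dist x y := fun x y h => hmin x y (hlift x y h)
  have hABuniv : A ∪ B ≠ Finset.univ := by
    intro h
    rw [h] at hsAB
    exact absurd hwsum (not_le.mpr hsAB)
  obtain ⟨z, hz⟩ : ∃ z, z ∉ A ∪ B := by
    by_contra hc
    push_neg at hc
    exact hABuniv (Finset.eq_univ_iff_forall.mpr hc)
  have hδL : dist u u' ≤ Lf (A ∪ B) := by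
    apply le_Lf ⟨u, Finset.mem_union_left _ hu⟩ ⟨z, hz⟩
    intro v hv v' hv'
    exact hminP' v v' (ipair_of_not_mem hcov' (Finset.mem_insert_self _ _) hv hv')
  have hδ0 : (0:ℝ) ≤ dist u u' := dist_nonneg
  refine ⟨hne', hdisj', hcov', ?_, ?_, inv.fne, ?_, inv.fcmp, ?_, inv.fconn, ?_,
    inv.lcm, ?_, ?_, inv.pariff, inv.parroot, inv.parsome, inv.rklt, inv.indeg⟩
  · -- pconn
    intro C hC hsC
    rcases Finset.mem_insert.mp hC with hCe | hC
    · subst C; exact hconn (Lf (A ∪ B)) hδL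
    · exact inv.pconn C (Finset.mem_erase.mp (Finset.mem_erase.mp hC).2).2 hsC
  · -- pdiam
    intro C hC hsC
    rcases Finset.mem_insert.mp hC with hCe | hC
    · subst C
      intro a ha b hb
      have h1 := hdiam a ha b hb
      have hhalf : 1/2 ≤ ∑ v ∈ A ∪ B, w v := half_le_sum hw (Finset.mem_union_left _ hu)
      have h2 : (2 * (∑ v ∈ A ∪ B, w v) - 1) * dist u u'
          ≤ (2 * (∑ v ∈ A ∪ B, w v) - 1) * Lf (A ∪ B) :=
        mul_le_mul_of_nonneg_left hδL (by linarith)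
      linarith
    · exact inv.pdiam C (Finset.mem_erase.mp (Finset.mem_erase.mp hC).2).2 hsC
  · -- fsub
    intro J hJ
    obtain ⟨Q, hQ, hQl, hJQ⟩ := inv.fsub J hJ
    have hQA : Q ≠ A := fun h => absurd hQl (by rw [h]; exact not_le.mpr hsA)
    have hQB : Q ≠ B := fun h => absurd hQl (by rw [h]; exact not_le.mpr hsB)
    exact ⟨Q, Finset.mem_insert_of_mem (Finset.mem_erase.mpr
      ⟨hQB, Finset.mem_erase.mpr ⟨hQA, hQ⟩⟩), hQl, hJQ⟩
  · -- cmpm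
    intro Q hQ hQl x hx
    rcases Finset.mem_insert.mp hQ with hQe | hQ
    · subst Q; exact absurd hQl (not_le.mpr hsAB)
    · exact inv.cmpm Q (Finset.mem_erase.mp (Finset.mem_erase.mp hQ).2).2 hQl x hx
  · -- fdiam
    intro J hJ a ha b hb x y hxy
    exact inv.fdiam J hJ a ha b hb x y (hlift x y hxy)
  · -- lcd
    intro K X hKX
    obtain ⟨a, ha, b, hb, hab⟩ := inv.lcd K X hKX
    exact ⟨a, ha, b, hb, fun x y h => hab x y (hlift x y h)⟩
  · -- lcL
    intro K X hKX x y hxy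
    exact inv.lcL K X hKX x y (hlift x y hxy)

lemma merge_small_root (hℓ : 1 ≤ ℓ) (hw : ∀ v : R, 1/2 ≤ w v)
    (inv : Inv ℓ w P F par rk cmp lc N)
    {A B : Finset R} (hA : A ∈ P) (hB : B ∈ P) (hAB : A ≠ B)
    {u u' : R} (hu : u ∈ A) (hu' : u' ∈ B)
    (hmin : ∀ x y, Ipair P x y → dist u u' ≤ dist x y)
    (hsA : (∑ v ∈ A, w v) < ℓ) (hsB : (∑ v ∈ B, w v) < ℓ)
    (hsAB : ℓ ≤ (∑ v ∈ A ∪ B, w v)) :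
    Inv ℓ w (insert (A ∪ B) ((P.erase A).erase B)) (insert (A ∪ B) F)
      (Function.update par (A ∪ B) none)
      (Function.update rk (A ∪ B) N)
      (fun x => if x ∈ A ∪ B then A ∪ B else cmp x)
      (Function.update lc (A ∪ B) none) (N + 1) := by
  obtain ⟨hABne, hcard, hne', hdisj', hcov', hlift⟩ :=
    part_step inv.pne inv.pdisj inv.pcov hA hB hAB
  obtain ⟨hconn, hdiam⟩ := merge_core hw inv hA hB hAB hu hu' hsA hsB
  have hminP' : ∀ x y, Ipair (insert (A ∪ B) ((P.erase A).erase B)) x y →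
      dist u u' ≤ dist x y := fun x y h => hmin x y (hlift x y h)
  have hδ0 : (0:ℝ) ≤ dist u u' := dist_nonneg
  have hDAB : Disjoint A B := inv.pdisj _ hA _ hB hAB
  have hswAB : (∑ v ∈ A ∪ B, w v) = (∑ v ∈ A, w v) + (∑ v ∈ B, w v) :=
    Finset.sum_union hDAB
  have hFdisjJ : ∀ K ∈ F, Disjoint K (A ∪ B) := by
    intro K hK
    obtain ⟨Q, hQ, hQl, hKQ⟩ := inv.fsub K hK
    have hQA : Q ≠ A := fun h => absurd hQl (by rw [h]; exact not_le.mpr hsA)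
    have hQB : Q ≠ B := fun h => absurd hQl (by rw [h]; exact not_le.mpr hsB)
    exact Finset.disjoint_of_subset_left hKQ (Finset.disjoint_union_right.mpr
      ⟨inv.pdisj _ hQ _ hA hQA, inv.pdisj _ hQ _ hB hQB⟩)
  have hJnF : A ∪ B ∉ F := by
    intro h
    exact Finset.disjoint_left.mp (hFdisjJ _ h) (Finset.mem_union_left _ hu)
      (Finset.mem_union_left _ hu)
  have hxJ : ∀ K ∈ F, ∀ x ∈ K, x ∉ A ∪ B := fun K hK x hx =>
    Finset.disjoint_left.mp (hFdisjJ K hK) hx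
  have hpar'J : Function.update par (A ∪ B) none (A ∪ B) = none :=
    Function.update_self _ _ _
  have hparF : ∀ K ∈ F, Function.update par (A ∪ B) none K = par K := by
    intro K hK
    apply Function.update_of_ne
    intro h; rw [h] at hK; exact hJnF hK
  have hrkF : ∀ K ∈ F, Function.update rk (A ∪ B) N K = rk K := by
    intro K hK
    apply Function.update_of_ne
    intro h; rw [h] at hK; exact hJnF hK
  have hlcF : ∀ K ∈ F, Function.update lc (A ∪ B) none K = lc K := by
    intro K hK
    apply Function.update_of_ne
    intro h; rw [h] at hK; exact hJnF hK
  have hlc'J : Function.update lc (A ∪ B) none (A ∪ B) = none :=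
    Function.update_self _ _ _
  have hlcupd : ∀ K X, Function.update lc (A ∪ B) none K = some X → lc K = some X ∧ K ≠ A ∪ B := by
    intro K X h
    by_cases hK : K = A ∪ B
    · subst hK; rw [hlc'J] at h; exact absurd h (by simp)
    · rw [Function.update_of_ne hK] at h; exact ⟨h, hK⟩
  constructor
  · exact hne'
  · exact hdisj'
  · exact hcov'
  · -- pconn
    intro C hC hsC
    rcases Finset.mem_insert.mp hC with hCe | hC
    · subst C; exact absurd hsAB (not_le.mpr hsC)
    · exact inv.pconn C (Finset.mem_erase.mp (Finset.mem_erase.mp hC).2).2 hsC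
  · -- pdiam
    intro C hC hsC
    rcases Finset.mem_insert.mp hC with hCe | hC
    · subst C; exact absurd hsAB (not_le.mpr hsC)
    · exact inv.pdiam C (Finset.mem_erase.mp (Finset.mem_erase.mp hC).2).2 hsC
  · -- fne
    intro J hJ
    rcases Finset.mem_insert.mp hJ with hJe | hJ
    · subst J; exact ⟨u, Finset.mem_union_left _ hu⟩
    · exact inv.fne J hJ
  · -- fsub
    intro J hJ
    rcases Finset.mem_insert.mp hJ with hJe | hJ
    · subst J
      exact ⟨A ∪ B, Finset.mem_insert_self _ _, hsAB, le_refl _⟩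
    · obtain ⟨Q, hQ, hQl, hJQ⟩ := inv.fsub J hJ
      have hQA : Q ≠ A := fun h => absurd hQl (by rw [h]; exact not_le.mpr hsA)
      have hQB : Q ≠ B := fun h => absurd hQl (by rw [h]; exact not_le.mpr hsB)
      exact ⟨Q, Finset.mem_insert_of_mem (Finset.mem_erase.mpr
        ⟨hQB, Finset.mem_erase.mpr ⟨hQA, hQ⟩⟩), hQl, hJQ⟩
  · -- fcmp
    intro J hJ x hx
    rcases Finset.mem_insert.mp hJ with hJe | hJ
    · subst J; simp [hx]
    · have hxn : x ∉ A ∪ B := hxJ J hJ x hx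
      simp only [if_neg hxn]
      exact inv.fcmp J hJ x hx
  · -- cmpm
    intro Q hQ hQl x hx
    rcases Finset.mem_insert.mp hQ with hQe | hQ
    · subst Q
      simp only [if_pos hx]
      exact ⟨Finset.mem_insert_self _ _, hx, le_refl _⟩
    · have hmem2 := Finset.mem_erase.mp (Finset.mem_erase.mp hQ).2
      have hQA : Q ≠ A := (Finset.mem_erase.mp (Finset.mem_erase.mp hQ).2).1
      have hQB : Q ≠ B := (Finset.mem_erase.mp hQ).1
      have hxn : x ∉ A ∪ B := by
        intro hc
        rcases Finset.mem_union.mp hc with h | h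
        · exact Finset.disjoint_left.mp (inv.pdisj _ hmem2.2 _ hA hQA) hx h
        · exact Finset.disjoint_left.mp (inv.pdisj _ hmem2.2 _ hB hQB) hx h
      simp only [if_neg hxn]
      obtain ⟨h1, h2, h3⟩ := inv.cmpm Q hmem2.2 hQl x hx
      exact ⟨Finset.mem_insert_of_mem h1, h2, h3⟩
  · -- fconn
    intro J hJ hJuniv
    rcases Finset.mem_insert.mp hJ with hJe | hJ
    · subst J
      obtain ⟨z, hz⟩ : ∃ z, z ∉ A ∪ B := by
        by_contra hc
        push_neg at hc
        exact hJuniv (Finset.eq_univ_iff_forall.mpr hc)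
      have hδL : dist u u' ≤ Lf (A ∪ B) := by
        apply le_Lf ⟨u, Finset.mem_union_left _ hu⟩ ⟨z, hz⟩
        intro v hv v' hv'
        exact hminP' v v' (ipair_of_not_mem hcov' (Finset.mem_insert_self _ _) hv hv')
      exact hconn (Lf (A ∪ B)) hδL
    · exact inv.fconn J hJ hJuniv
  · -- fdiam
    intro J hJ a ha b hb x y hxy
    rcases Finset.mem_insert.mp hJ with hJe | hJ
    · subst J
      have h1 := hdiam a ha b hb
      have hd : dist u u' ≤ dist x y := hminP' x y hxy
      have hhalf : 1/2 ≤ ∑ v ∈ A ∪ B, w v := half_le_sum hw (Finset.mem_union_left _ hu)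
      have hlt : (∑ v ∈ A ∪ B, w v) < 2 * ℓ := by rw [hswAB]; linarith
      have e1 : (2 * (∑ v ∈ A ∪ B, w v) - 1) * dist u u'
          ≤ (2 * (∑ v ∈ A ∪ B, w v) - 1) * dist x y :=
        mul_le_mul_of_nonneg_left hd (by linarith)
      have e2 : (2 * (∑ v ∈ A ∪ B, w v) - 1) * dist x y ≤ (4 * ℓ - 1) * dist x y :=
        mul_le_mul_of_nonneg_right (by linarith) (le_trans hδ0 hd)
      linarith
    · exact inv.fdiam J hJ a ha b hb x y (hlift x y hxy)
  · -- lcm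
    intro K X hKX
    obtain ⟨hKX', hKJ⟩ := hlcupd K X hKX
    obtain ⟨h1, h2, h3⟩ := inv.lcm K X hKX'
    exact ⟨Finset.mem_insert_of_mem h1, Finset.mem_insert_of_mem h2, h3⟩
  · -- lcd
    intro K X hKX
    obtain ⟨hKX', hKJ⟩ := hlcupd K X hKX
    obtain ⟨a, ha, b, hb, hab⟩ := inv.lcd K X hKX'
    exact ⟨a, ha, b, hb, fun x y h => hab x y (hlift x y h)⟩
  · -- lcL
    intro K X hKX x y hxy
    obtain ⟨hKX', hKJ⟩ := hlcupd K X hKX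
    exact inv.lcL K X hKX' x y (hlift x y hxy)
  · -- pariff
    intro J hJ
    rcases Finset.mem_insert.mp hJ with hJe | hJ
    · subst J
      rw [hpar'J]
      exact iff_of_true rfl hsAB
    · rw [hparF J hJ]
      exact inv.pariff J hJ
  · -- parroot
    intro J hJ hpj
    rcases Finset.mem_insert.mp hJ with hJe | hJ
    · subst J
      left
      rw [hswAB]
      linarith
    · rw [hparF J hJ] at hpj
      exact inv.parroot J hJ hpj
  · -- parsome
    intro J hJ J'' hpj
    rcases Finset.mem_insert.mp hJ with hJe | hJ
    · subst J
      rw [hpar'J] at hpj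
      exact absurd hpj (by simp)
    · rw [hparF J hJ] at hpj
      obtain ⟨h1, h2, h3, h4⟩ := inv.parsome J hJ J'' hpj
      refine ⟨Finset.mem_insert_of_mem h1, ?_, h3, h4⟩
      rw [hrkF J hJ, hrkF J'' h1]
      exact h2
  · -- rklt
    intro J hJ
    rcases Finset.mem_insert.mp hJ with hJe | hJ
    · subst J; rw [Function.update_self]; omega
    · rw [hrkF J hJ]
      exact Nat.lt_succ_of_lt (inv.rklt J hJ)
  · -- indeg
    intro K hK
    rcases Finset.mem_insert.mp hK with hKe | hKF
    · subst K
      have h1 : (insert (A ∪ B) F).filter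
          (fun J => Function.update par (A ∪ B) none J = some (A ∪ B)) = ∅ := by
        apply Finset.filter_eq_empty_iff.mpr
        intro J hJ
        rcases Finset.mem_insert.mp hJ with hJe | hJ
        · subst J; rw [hpar'J]; simp
        · rw [hparF J hJ]
          intro h
          exact hJnF (inv.parsome J hJ _ h).1
      have h2 : (insert (A ∪ B) F).filter
          (fun J => Function.update lc (A ∪ B) none J = some (A ∪ B)) = ∅ := by
        apply Finset.filter_eq_empty_iff.mpr
        intro J hJ
        intro h
        obtain ⟨h', hJne⟩ := hlcupd J _ h
        exact hJnF (inv.lcm J _ h').2.1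
      rw [h1, h2, hlc'J]
      simp
    · have hKJ : K ≠ A ∪ B := fun h => hJnF (h ▸ hKF)
      have hc1 : (insert (A ∪ B) F).filter
          (fun J => Function.update par (A ∪ B) none J = some K)
          = F.filter (fun J => par J = some K) := by
        rw [Finset.filter_insert, hpar'J, if_neg (by simp)]
        exact Finset.filter_congr (fun J hJ => by rw [hparF J hJ])
      have hc2 : (insert (A ∪ B) F).filter
          (fun J => Function.update lc (A ∪ B) none J = some K)
          = F.filter (fun J => lc J = some K) := by
        rw [Finset.filter_insert, hlc'J, if_neg (by simp)]
        exact Finset.filter_congr (fun J hJ => by rw [hlcF J hJ])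
      rw [hc1, hc2, hlcF K hKF]
      exact inv.indeg K hKF

lemma step (hℓ : 1 ≤ ℓ) (hw : ∀ v : R, 1/2 ≤ w v) (hwsum : ℓ ≤ ∑ v : R, w v)
    (inv : Inv ℓ w P F par rk cmp lc N) (h2 : 2 ≤ P.card) :
    ∃ (P' F' : Finset (Finset R)) (par' : Finset R → Option (Finset R))
      (rk' : Finset R → ℕ) (cmp' : R → Finset R)
      (lc' : Finset R → Option (Finset R)) (N' : ℕ),
      P'.card + 1 = P.card ∧ Inv ℓ w P' F' par' rk' cmp' lc' N' := by
  classical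
  have hcommon : ∀ x y : R, (¬ ∃ C ∈ P, x ∈ C ∧ y ∈ C) ↔ Ipair P x y := by
    intro x y
    constructor
    · intro h
      obtain ⟨A, hA, hx⟩ := inv.pcov x
      obtain ⟨B, hB, hy⟩ := inv.pcov y
      refine ⟨A, hA, B, hB, ?_, hx, hy⟩
      intro hAB
      exact h ⟨A, hA, hx, hAB ▸ hy⟩
    · rintro ⟨A, hA, B, hB, hAB, hx, hy⟩ ⟨C, hC, hxC, hyC⟩
      have h1 : A = C := by
        by_contra h
        exact Finset.disjoint_left.mp (inv.pdisj _ hA _ hC h) hx hxC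
      have h2 : B = C := by
        by_contra h
        exact Finset.disjoint_left.mp (inv.pdisj _ hB _ hC h) hy hyC
      exact hAB (h1.trans h2.symm)
  set S : Finset (R × R) :=
    Finset.univ.filter (fun p => ¬ ∃ C ∈ P, p.1 ∈ C ∧ p.2 ∈ C) with hS
  have hSne : S.Nonempty := by
    obtain ⟨A0, hA0, B0, hB0, hAB0⟩ := Finset.one_lt_card.mp h2
    obtain ⟨u0, hu0⟩ := inv.pne A0 hA0
    obtain ⟨u0', hu0'⟩ := inv.pne B0 hB0
    refine ⟨(u0, u0'), Finset.mem_filter.mpr ⟨Finset.mem_univ _, ?_⟩⟩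
    exact (hcommon u0 u0').mpr ⟨A0, hA0, B0, hB0, hAB0, hu0, hu0'⟩
  obtain ⟨p, hp, hpmin⟩ := S.exists_min_image (fun p => dist p.1 p.2) hSne
  have hpI : Ipair P p.1 p.2 := (hcommon p.1 p.2).mp (Finset.mem_filter.mp hp).2
  obtain ⟨A, hA, B, hB, hAB, hu, hu'⟩ := hpI
  have hmin : ∀ x y, Ipair P x y → dist p.1 p.2 ≤ dist x y := by
    intro x y h
    exact hpmin (x, y) (Finset.mem_filter.mpr ⟨Finset.mem_univ _, (hcommon x y).mpr h⟩)
  obtain ⟨-, hcard, -, -, -, -⟩ := part_step inv.pne inv.pdisj inv.pcov hA hB hAB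
  obtain ⟨-, hcard', -, -, -, -⟩ := part_step inv.pne inv.pdisj inv.pcov hB hA hAB.symm
  by_cases hsA : (∑ v ∈ A, w v) < ℓ
  · by_cases hsB : (∑ v ∈ B, w v) < ℓ
    · by_cases hsAB : (∑ v ∈ A ∪ B, w v) < ℓ
      · exact ⟨_, F, par, rk, cmp, lc, N, hcard,
          merge_small_small hw hwsum inv hA hB hAB hu hu' hmin hsA hsB hsAB⟩
      · exact ⟨_, _, _, _, _, _, _, hcard,
          merge_small_root hℓ hw inv hA hB hAB hu hu' hmin hsA hsB (not_lt.mp hsAB)⟩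
    · exact ⟨_, _, _, _, _, _, _, hcard,
        absorb hℓ hw inv hA hB hAB hu hu' hmin hsA (not_lt.mp hsB)⟩
  · by_cases hsB : (∑ v ∈ B, w v) < ℓ
    · have hmin' : ∀ x y, Ipair P x y → dist p.2 p.1 ≤ dist x y := by
        intro x y h
        rw [dist_comm]
        exact hmin x y h
      exact ⟨_, _, _, _, _, _, _, hcard',
        absorb hℓ hw inv hB hA hAB.symm hu' hu hmin' hsB (not_lt.mp hsA)⟩
    · exact ⟨_, F, par, rk, cmp, lc, N, hcard,
        merge_large hw inv hA hB hAB (not_lt.mp hsA) (not_lt.mp hsB)⟩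

lemma init (hℓ : 1 ≤ ℓ) (hw : ∀ v : R, 1/2 ≤ w v) :
    Inv ℓ w (Finset.univ.image fun v => ({v} : Finset R))
      ((Finset.univ.filter fun v => ℓ ≤ w v).image fun v => ({v} : Finset R))
      (fun _ => none) (fun _ => 0) (fun x => {x}) (fun _ => none) 1 := by
  have hwpos : ∀ v : R, 0 ≤ w v := fun v => le_trans (by norm_num) (hw v)
  constructor
  · rintro A hA
    obtain ⟨v, -, rfl⟩ := Finset.mem_image.mp hA
    exact ⟨v, Finset.mem_singleton_self v⟩
  · rintro A hA B hB hne
    obtain ⟨v, -, rfl⟩ := Finset.mem_image.mp hA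
    obtain ⟨v', -, rfl⟩ := Finset.mem_image.mp hB
    rw [Finset.disjoint_left]
    intro a ha ha'
    rw [Finset.mem_singleton] at ha ha'
    exact hne (by rw [← ha, ← ha'])
  · intro x
    exact ⟨{x}, Finset.mem_image_of_mem _ (Finset.mem_univ x), Finset.mem_singleton_self x⟩
  · rintro A hA -
    obtain ⟨v, -, rfl⟩ := Finset.mem_image.mp hA
    intro a ha b hb
    rw [Finset.mem_singleton] at ha hb
    rw [ha, hb]
  · rintro A hA -
    obtain ⟨v, -, rfl⟩ := Finset.mem_image.mp hA
    intro a ha b hb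
    rw [Finset.mem_singleton] at ha hb
    rw [ha, hb, dist_self]
    apply mul_nonneg _ (Lf_nonneg _)
    rw [Finset.sum_singleton]
    linarith [hw v]
  · rintro J hJ
    obtain ⟨v, -, rfl⟩ := Finset.mem_image.mp hJ
    exact ⟨v, Finset.mem_singleton_self v⟩
  · rintro J hJ
    obtain ⟨v, hv, rfl⟩ := Finset.mem_image.mp hJ
    have hl : ℓ ≤ w v := (Finset.mem_filter.mp hv).2
    exact ⟨{v}, Finset.mem_image_of_mem _ (Finset.mem_univ v),
      by rw [Finset.sum_singleton]; exact hl, le_refl _⟩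
  · rintro J hJ x hx
    obtain ⟨v, -, rfl⟩ := Finset.mem_image.mp hJ
    rw [Finset.mem_singleton] at hx
    rw [hx]
  · rintro Q hQ hQl x hx
    obtain ⟨v, -, rfl⟩ := Finset.mem_image.mp hQ
    rw [Finset.mem_singleton] at hx
    subst hx
    rw [Finset.sum_singleton] at hQl
    exact ⟨Finset.mem_image_of_mem _ (Finset.mem_filter.mpr ⟨Finset.mem_univ x, hQl⟩),
      Finset.mem_singleton_self x, le_refl _⟩
  · rintro J hJ -
    obtain ⟨v, -, rfl⟩ := Finset.mem_image.mp hJ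
    intro a ha b hb
    rw [Finset.mem_singleton] at ha hb
    rw [ha, hb]
  · rintro J hJ a ha b hb x y -
    obtain ⟨v, -, rfl⟩ := Finset.mem_image.mp hJ
    rw [Finset.mem_singleton] at ha hb
    rw [ha, hb, dist_self]
    apply mul_nonneg _ dist_nonneg
    linarith
  · rintro K X h; exact absurd h (by simp)
  · rintro K X h; exact absurd h (by simp)
  · rintro K X h; exact absurd h (by simp)
  · rintro J hJ
    obtain ⟨v, hv, rfl⟩ := Finset.mem_image.mp hJ
    have hl : ℓ ≤ w v := (Finset.mem_filter.mp hv).2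
    exact iff_of_true rfl (by rw [Finset.sum_singleton]; exact hl)
  · rintro J hJ -
    obtain ⟨v, -, rfl⟩ := Finset.mem_image.mp hJ
    right
    exact Finset.card_singleton v
  · rintro J hJ J' h; exact absurd h (by simp)
  · rintro J hJ; omega
  · rintro K hK
    have h1 : (((Finset.univ.filter fun v => ℓ ≤ w v).image fun v => ({v} : Finset R)).filter
        (fun J => (none : Option (Finset R)) = some K)) = ∅ := by
      apply Finset.filter_eq_empty_iff.mpr
      intro J hJ
      simp
    rw [h1]
    simp

lemma main (hℓ : 1 ≤ ℓ) (hw : ∀ v : R, 1/2 ≤ w v) (hwsum : ℓ ≤ ∑ v : R, w v) :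
    ∀ (n : ℕ) (P F : Finset (Finset R)) (par : Finset R → Option (Finset R))
      (rk : Finset R → ℕ) (cmp : R → Finset R) (lc : Finset R → Option (Finset R))
      (N : ℕ), P.card ≤ n → Inv ℓ w P F par rk cmp lc N →
      ∃ (𝒥 : Finset (Finset R)) (par' : Finset R → Option (Finset R))
        (rk' : Finset R → ℕ),
        (∀ J ∈ 𝒥, J.Nonempty) ∧
        (∀ J ∈ 𝒥, ∀ J' ∈ 𝒥, J ≠ J' → Disjoint J J') ∧
        𝒥.biUnion id = Finset.univ ∧
        (∀ J ∈ 𝒥, ∀ J', par' J = some J' → J' ∈ 𝒥 ∧ rk' J' < rk' J) ∧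
        (∀ J ∈ 𝒥, J ≠ Finset.univ → ∀ v ∈ J, ∀ v' ∈ J,
          Relation.ReflTransGen (fun a b => a ∈ J ∧ b ∈ J ∧ dist a b ≤ Lf J) v v') ∧
        (∀ J ∈ 𝒥, (par' J = none ↔ ℓ ≤ ∑ v ∈ J, w v)) ∧
        (∀ J ∈ 𝒥, par' J = none → (∑ v ∈ J, w v) < 2 * ℓ ∨ J.card = 1) ∧
        (∀ J ∈ 𝒥, ∀ J', par' J = some J' → Lf J' ≤ Lf J) ∧
        (∀ J ∈ 𝒥, ∀ J', par' J = some J' → dS J J' ≤ 5 * ℓ * Lf J) ∧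
        (∀ J' ∈ 𝒥, (𝒥.filter (fun J => par' J = some J')).card ≤ 2) := by
  intro n
  induction n with
  | zero =>
    intro P F par rk cmp lc N hn inv
    exfalso
    have hP : P = ∅ := Finset.card_eq_zero.mp (Nat.le_zero.mp hn)
    have hempty : IsEmpty R := by
      constructor
      intro x
      obtain ⟨A, hA, -⟩ := inv.pcov x
      rw [hP] at hA
      exact absurd hA (Finset.notMem_empty A)
    rw [Finset.univ_eq_empty, Finset.sum_empty] at hwsum
    linarith
  | succ n ih =>
    intro P F par rk cmp lc N hn inv
    by_cases hc : P.card ≤ n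
    · exact ih P F par rk cmp lc N hc inv
    · by_cases h1 : P.card ≤ 1
      · -- terminal case
        have hcard1 : P.card = 1 := by omega
        obtain ⟨U, hU⟩ := Finset.card_eq_one.mp hcard1
        have hUP : U ∈ P := by rw [hU]; exact Finset.mem_singleton_self U
        have hUuniv : U = Finset.univ := by
          apply Finset.eq_univ_iff_forall.mpr
          intro x
          obtain ⟨A, hA, hx⟩ := inv.pcov x
          rw [hU, Finset.mem_singleton] at hA
          rw [← hA]
          exact hx
        have hUl : ℓ ≤ ∑ v ∈ U, w v := by rw [hUuniv]; exact hwsum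
        refine ⟨F, par, rk, inv.fne, ?_, ?_, ?_, ?_, inv.pariff, inv.parroot, ?_, ?_, ?_⟩
        · intro J hJ J' hJ' hne
          rw [Finset.disjoint_left]
          intro a haJ haJ'
          exact hne ((inv.fcmp J hJ a haJ).symm.trans (inv.fcmp J' hJ' a haJ'))
        · apply Finset.eq_univ_iff_forall.mpr
          intro x
          obtain ⟨h1', h2', -⟩ := inv.cmpm U hUP hUl x (by rw [hUuniv]; exact Finset.mem_univ x)
          exact Finset.mem_biUnion.mpr ⟨cmp x, h1', h2'⟩
        · intro J hJ J' hpj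
          obtain ⟨ha, hb, -, -⟩ := inv.parsome J hJ J' hpj
          exact ⟨ha, hb⟩
        · intro J hJ hJu v hv v' hv'
          exact inv.fconn J hJ hJu v hv v' hv'
        · intro J hJ J' hpj
          exact (inv.parsome J hJ J' hpj).2.2.1
        · intro J hJ J' hpj
          exact (inv.parsome J hJ J' hpj).2.2.2
        · intro J' hJ'
          have := inv.indeg J' hJ'
          omega
      · have h2 : 2 ≤ P.card := by omega
        obtain ⟨P', F', par', rk', cmp', lc', N', hcard, inv'⟩ :=
          step hℓ hw hwsum inv h2
        exact ih P' F' par' rk' cmp' lc' N' (by omega) inv'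

end Steps

end Stmt5


/-- Lemma 3.4: partition of the representatives into black components with a
degree-2 rooted forest structure (explicit constant `5ℓ` in Property (e)). -/
theorem stmt_5 {R : Type*} [MetricSpace R] [Fintype R] [DecidableEq R]
    (ℓ : ℝ) (hℓ : 1 ≤ ℓ)
    (w : R → ℝ) (hw : ∀ v : R, 1 / 2 ≤ w v) (hwsum : ℓ ≤ ∑ v : R, w v) :
    ∃ (𝒥 : Finset (Finset R)) (par : Finset R → Option (Finset R))
      (rk : Finset R → ℕ),
      -- 𝒥 is a partition of R into nonempty sets
      (∀ J ∈ 𝒥, J.Nonempty) ∧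
      (∀ J ∈ 𝒥, ∀ J' ∈ 𝒥, J ≠ J' → Disjoint J J') ∧
      𝒥.biUnion id = Finset.univ ∧
      -- par defines a rooted forest on 𝒥
      (∀ J ∈ 𝒥, ∀ J', par J = some J' → J' ∈ 𝒥 ∧ rk J' < rk J) ∧
      -- the six properties, with L(J) the distance from J to its complement
      (let L : Finset R → ℝ :=
        fun J => sInf {r : ℝ | ∃ v ∈ J, ∃ v', v' ∉ J ∧ r = dist v v'};
      -- (a) J is connected by edges of length at most L(J)
      (∀ J ∈ 𝒥, J ≠ Finset.univ → ∀ v ∈ J, ∀ v' ∈ J,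
        Relation.ReflTransGen (fun a b => a ∈ J ∧ b ∈ J ∧ dist a b ≤ L J) v v') ∧
      -- (b) roots are exactly the components of weight at least ℓ
      (∀ J ∈ 𝒥, (par J = none ↔ ℓ ≤ ∑ v ∈ J, w v)) ∧
      -- (c) a root has weight less than 2ℓ or is a singleton
      (∀ J ∈ 𝒥, par J = none → (∑ v ∈ J, w v) < 2 * ℓ ∨ J.card = 1) ∧
      -- (d) L values decrease towards the root
      (∀ J ∈ 𝒥, ∀ J', par J = some J' → L J' ≤ L J) ∧
      -- (e) a component is close to its parent
      (∀ J ∈ 𝒥, ∀ J', par J = some J' →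
        sInf {r : ℝ | ∃ v ∈ J, ∃ v' ∈ J', r = dist v v'} ≤ 5 * ℓ * L J) ∧
      -- (f) every component has at most two children
      (∀ J' ∈ 𝒥, (𝒥.filter (fun J => par J = some J')).card ≤ 2)) := by
  classical
  obtain ⟨𝒥, par, rk, h1, h2, h3, h4, h5, h6, h7, h8, h9, h10⟩ :=
    Stmt5.main hℓ hw hwsum ((Finset.univ.image fun v => ({v} : Finset R)).card)
      (Finset.univ.image fun v => ({v} : Finset R))
      ((Finset.univ.filter fun v => ℓ ≤ w v).image fun v => ({v} : Finset R))
      (fun _ => none) (fun _ => 0) (fun x => {x}) (fun _ => none) 1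
      (le_refl _) (Stmt5.init hℓ hw)
  exact ⟨𝒥, par, rk, h1, h2, h3, h4, h5, h6, h7, h8, h9, h10⟩
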